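/- Let π₁, π₂ be nonnegative measures on ℝ^d with equal mass c₁ > 0, such that π_i/c₁ has mean m_i and covariance Σ_i. Then for every coupling π of π₁ and π₂, ∫∫ ‖x₂ − x₁‖² dπ(x₁,x₂) ≥ c₁ ( ‖m₂ − m₁‖² + Trace(Σ₁ + Σ₂ − 2(Σ₁^{1/2} Σ₂ Σ₁^{1/2})^{1/2}) ). -/

import Mathlib

open MeasureTheory Matrix Real

open Classical in
noncomputable def msqrt {d : ℕ} (A : Matrix (Fin d) (Fin d) ℝ) : Matrix (Fin d) (Fin d) ℝ :=
  if h : A.PosSemidef then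
    (h.1.eigenvectorUnitary : Matrix (Fin d) (Fin d) ℝ) *
      diagonal ((↑) ∘ (Real.sqrt ·) ∘ h.1.eigenvalues) *
      (star (h.1.eigenvectorUnitary : Matrix (Fin d) (Fin d) ℝ))
  else 0

noncomputable def gaussianPdf {ι : Type*} [Fintype ι] [DecidableEq ι]
    (m : EuclideanSpace ℝ ι) (S : Matrix ι ι ℝ) (x : EuclideanSpace ℝ ι) : ℝ :=
  Real.sqrt (((2 * Real.pi) ^ (Fintype.card ι) * S.det)⁻¹) *
    Real.exp (-(1 / 2) * ∑ i, ∑ j, (x i - m i) * S⁻¹ i j * (x j - m j))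

noncomputable def gaussian {ι : Type*} [Fintype ι] [DecidableEq ι]
    (m : EuclideanSpace ℝ ι) (S : Matrix ι ι ℝ) : Measure (EuclideanSpace ℝ ι) :=
  volume.withDensity fun x => ENNReal.ofReal (gaussianPdf m S x)

noncomputable def KLdiv {ι : Type*} [Fintype ι]
    (α β : Measure (EuclideanSpace ℝ ι)) : ℝ :=
  (∫ x, Real.log ((α.rnDeriv β x).toReal) ∂α) - (β Set.univ).toReal + (α Set.univ).toReal


set_option maxHeartbeats 1600000

namespace Matrix.PosSemidef
variable {n : Type*} [Fintype n] [DecidableEq n]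

noncomputable def sqrt {A : Matrix n n ℝ} (h : A.PosSemidef) : Matrix n n ℝ :=
  (h.1.eigenvectorUnitary : Matrix n n ℝ) *
      diagonal ((↑) ∘ (Real.sqrt ·) ∘ h.1.eigenvalues) *
      (star (h.1.eigenvectorUnitary : Matrix n n ℝ))

lemma posSemidef_sqrt {A : Matrix n n ℝ} (h : A.PosSemidef) : h.sqrt.PosSemidef := by
  unfold sqrt
  have hD : (diagonal ((↑) ∘ (Real.sqrt ·) ∘ h.1.eigenvalues) : Matrix n n ℝ).PosSemidef :=
    posSemidef_diagonal_iff.mpr fun i => by simp [Real.sqrt_nonneg]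
  exact hD.mul_mul_conjTranspose_same _

lemma sqrt_mul_self {A : Matrix n n ℝ} (h : A.PosSemidef) : h.sqrt * h.sqrt = A := by
  unfold sqrt
  have hUU : star (h.1.eigenvectorUnitary : Matrix n n ℝ) * (h.1.eigenvectorUnitary : Matrix n n ℝ)
      = 1 := Unitary.coe_star_mul_self _
  have hspec := h.1.spectral_theorem
  rw [Unitary.conjStarAlgAut_apply] at hspec
  conv_rhs => rw [hspec]
  simp only [Matrix.mul_assoc]
  rw [← Matrix.mul_assoc (star (h.1.eigenvectorUnitary : Matrix n n ℝ)), hUU, Matrix.one_mul,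
    ← Matrix.mul_assoc (diagonal _), diagonal_mul_diagonal]
  congr 3
  funext i
  simp [Real.mul_self_sqrt (h.eigenvalues_nonneg i)]

end Matrix.PosSemidef

lemma msqrt_eq {d : ℕ} {A : Matrix (Fin d) (Fin d) ℝ} (h : A.PosSemidef) :
    msqrt A = h.sqrt := dif_pos h

section helpers
variable {n : Type*} [Fintype n] [DecidableEq n]

omit [DecidableEq n] in
lemma dot_self_nonneg (x : n → ℝ) : 0 ≤ x ⬝ᵥ x :=
  Finset.sum_nonneg fun i _ => mul_self_nonneg _

omit [DecidableEq n] in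
lemma dot_self_pos {x : n → ℝ} (hx : x ≠ 0) : 0 < x ⬝ᵥ x := by
  rcases Function.ne_iff.mp hx with ⟨i, hi⟩
  have h1 : 0 < x i * x i := mul_self_pos.mpr (by simpa using hi)
  calc (0:ℝ) < x i * x i := h1
    _ ≤ ∑ j, x j * x j := Finset.single_le_sum (fun j _ => mul_self_nonneg (x j)) (Finset.mem_univ i)

lemma pd_smul_one {c : ℝ} (hc : 0 < c) : ((c • (1 : Matrix n n ℝ))).PosDef := by
  exact Matrix.PosDef.one.smul hc

omit [DecidableEq n] in
lemma psd_smul {P : Matrix n n ℝ} (hP : P.PosSemidef) {c : ℝ} (hc : 0 ≤ c) :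
    (c • P).PosSemidef := by
  exact hP.smul hc

lemma psd_trace_nonneg {P : Matrix n n ℝ} (hP : P.PosSemidef) : 0 ≤ P.trace := by
  exact hP.trace_nonneg

omit [DecidableEq n] in
lemma diag_conj (X Q : Matrix n n ℝ) (i : n) :
    (Xᵀ * Q * X) i i = (fun k => X k i) ⬝ᵥ Q *ᵥ (fun k => X k i) := by
  simp only [Matrix.mul_apply, Matrix.transpose_apply, dotProduct, mulVec, Finset.sum_mul,
    Finset.mul_sum]
  rw [Finset.sum_comm]
  congr 1; ext j; congr 1; ext k; ring

omit [DecidableEq n] in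
lemma diag_conj' {X : Matrix n n ℝ} (hX : Xᵀ = X) (Q : Matrix n n ℝ) (i : n) :
    (X * Q * X) i i = (fun k => X k i) ⬝ᵥ Q *ᵥ (fun k => X k i) := by
  conv_lhs => rw [show X * Q * X = Xᵀ * Q * X by rw [hX]]
  exact diag_conj X Q i

lemma trace_mul_le_of_form {Q : Matrix n n ℝ} {c : ℝ}
    (hQ : ∀ x : n → ℝ, x ⬝ᵥ Q *ᵥ x ≤ c * (x ⬝ᵥ x)) {P : Matrix n n ℝ} (hP : P.PosSemidef) :
    (Q * P).trace ≤ c * P.trace := by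
  set R := hP.sqrt with hR
  have hRt : Rᵀ = R := hP.posSemidef_sqrt.isHermitian
  have h1 : (Q * P).trace = (R * Q * R).trace := by
    rw [← hP.sqrt_mul_self, ← hR, ← Matrix.mul_assoc, trace_mul_comm, Matrix.mul_assoc,
      ← Matrix.mul_assoc]
  have h2 : c * P.trace = c * (R * R).trace := by rw [hP.sqrt_mul_self]
  rw [h1, h2, Matrix.trace, Matrix.trace, Finset.mul_sum]
  refine Finset.sum_le_sum fun i _ => ?_
  have hd : (R * Q * R) i i = (fun k => R k i) ⬝ᵥ Q *ᵥ (fun k => R k i) := diag_conj' hRt Q i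
  have hd2 : (R * R) i i = (fun k => R k i) ⬝ᵥ (fun k => R k i) := by
    have := diag_conj' hRt 1 i
    simpa using this
  simp only [Matrix.diag_apply, hd, hd2]
  exact hQ _

lemma trace_mul_nonneg {Q P : Matrix n n ℝ} (hQ : Q.PosSemidef) (hP : P.PosSemidef) :
    0 ≤ (Q * P).trace := by
  set R := hP.sqrt with hR
  have hRt : Rᵀ = R := hP.posSemidef_sqrt.isHermitian
  have h1 : (Q * P).trace = (R * Q * R).trace := by
    rw [← hP.sqrt_mul_self, ← hR, ← Matrix.mul_assoc, trace_mul_comm, Matrix.mul_assoc,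
      ← Matrix.mul_assoc]
  rw [h1, Matrix.trace]
  refine Finset.sum_nonneg fun i _ => ?_
  rw [Matrix.diag_apply, diag_conj' hRt Q i]
  simpa [star_trivial] using hQ.dotProduct_mulVec_nonneg (fun k => R k i)

lemma inv_form_le {B : Matrix n n ℝ} (hB : B.PosDef) {ε : ℝ} (hε : 0 < ε)
    (hlb : ∀ x : n → ℝ, ε * (x ⬝ᵥ x) ≤ x ⬝ᵥ B *ᵥ x) (x : n → ℝ) :
    x ⬝ᵥ B⁻¹ *ᵥ x ≤ ε⁻¹ * (x ⬝ᵥ x) := by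
  have hdet : IsUnit B.det := (Matrix.isUnit_iff_isUnit_det _).mp hB.isUnit
  set y := B⁻¹ *ᵥ x with hy
  have hBy : B *ᵥ y = x := by
    rw [hy, mulVec_mulVec, Matrix.mul_nonsing_inv _ hdet, one_mulVec]
  have h0 : x ⬝ᵥ B⁻¹ *ᵥ x = y ⬝ᵥ (B *ᵥ y) := by
    rw [← hy, dotProduct_comm, hBy]
  set t := y ⬝ᵥ (B *ᵥ y) with ht
  have htx : t = y ⬝ᵥ x := by rw [ht, hBy]
  have hyy : ε * (y ⬝ᵥ y) ≤ t := hlb y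
  have hynn : 0 ≤ y ⬝ᵥ y := dot_self_nonneg y
  have hxx : 0 ≤ x ⬝ᵥ x := dot_self_nonneg x
  have hCS : (y ⬝ᵥ x) ^ 2 ≤ (y ⬝ᵥ y) * (x ⬝ᵥ x) := by
    have h := Finset.sum_mul_sq_le_sq_mul_sq Finset.univ y x
    simpa [dotProduct, pow_two] using h
  rw [h0]
  rcases le_or_gt t 0 with h | h
  · calc t ≤ 0 := h
      _ ≤ ε⁻¹ * (x ⬝ᵥ x) := by positivity
  · have h2 : t ^ 2 ≤ (t / ε) * (x ⬝ᵥ x) := by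
      calc t ^ 2 = (y ⬝ᵥ x) ^ 2 := by rw [htx]
        _ ≤ (y ⬝ᵥ y) * (x ⬝ᵥ x) := hCS
        _ ≤ (t / ε) * (x ⬝ᵥ x) := by
            apply mul_le_mul_of_nonneg_right _ hxx
            rw [le_div_iff₀ hε]; linarith [hyy]
    have h2' : t * t ≤ t * (ε⁻¹ * (x ⬝ᵥ x)) := by
      rw [pow_two] at h2
      calc t * t ≤ (t / ε) * (x ⬝ᵥ x) := h2
        _ = t * (ε⁻¹ * (x ⬝ᵥ x)) := by rw [div_eq_mul_inv]; ring
    exact le_of_mul_le_mul_left h2' h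

lemma pointwise_bound {T T' : Matrix n n ℝ} (hT : T.PosSemidef) (hT't : T'ᵀ = T')
    (hTT' : T * T' = 1) (u v : n → ℝ) :
    2 * (u ⬝ᵥ v) ≤ u ⬝ᵥ T *ᵥ u + v ⬝ᵥ T' *ᵥ v := by
  have hT'T : T' * T = 1 := mul_eq_one_comm.mp hTT'
  have h := hT.dotProduct_mulVec_nonneg (u - T' *ᵥ v)
  simp only [star_trivial] at h
  have e1 : T *ᵥ (T' *ᵥ v) = v := by rw [mulVec_mulVec, hTT', one_mulVec]
  have eT' : T' *ᵥ v = v ᵥ* T' := by nth_rewrite 1 [← hT't]; rw [mulVec_transpose]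
  have e2 : (T' *ᵥ v) ⬝ᵥ (T *ᵥ u) = v ⬝ᵥ u := by
    rw [eT', ← dotProduct_mulVec, mulVec_mulVec, hT'T, one_mulVec]
  rw [mulVec_sub, sub_dotProduct, dotProduct_sub, dotProduct_sub, e1, e2,
    dotProduct_comm (T' *ᵥ v) v] at h
  have hcomm : v ⬝ᵥ u = u ⬝ᵥ v := dotProduct_comm v u
  linarith [h]

end helpers

theorem matrix_key {d : ℕ} (S₁ S₂ : Matrix (Fin d) (Fin d) ℝ)
    (hS₁ : S₁.PosSemidef) (hS₂ : S₂.PosSemidef) {η : ℝ} (hη : 0 < η) :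
    ∃ T T' : Matrix (Fin d) (Fin d) ℝ, T.PosSemidef ∧ T'ᵀ = T' ∧ T * T' = 1 ∧
      (T * S₁).trace + (T' * S₂).trace
        ≤ 2 * (msqrt (msqrt S₁ * S₂ * msqrt S₁)).trace + η := by
  set A := hS₁.sqrt with hAdef
  have hA : A.PosSemidef := hS₁.posSemidef_sqrt
  have hAt : Aᵀ = A := hA.isHermitian
  have hAA : A * A = S₁ := hS₁.sqrt_mul_self
  have hM : (A * S₂ * A).PosSemidef := by
    have := hS₂.mul_mul_conjTranspose_same A
    rwa [show Aᴴ = A from hA.isHermitian] at this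
  set M := A * S₂ * A with hMdef
  set R := hM.sqrt with hRdef
  have hRpsd : R.PosSemidef := hM.posSemidef_sqrt
  have hRt : Rᵀ = R := hRpsd.isHermitian
  have hRR : R * R = M := hM.sqrt_mul_self
  have hmsq : msqrt (msqrt S₁ * S₂ * msqrt S₁) = R := by
    rw [msqrt_eq hS₁]
    exact msqrt_eq hM
  set τ := R.trace with hτ
  -- constants
  set ε : ℝ := η / (2 * (d + 1)) with hεdef
  have hε : 0 < ε := by positivity
  have hP₁ : ((A + S₂) * (A + S₂)).PosSemidef := by
    have h := Matrix.posSemidef_conjTranspose_mul_self (A + S₂)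
    rwa [show (A + S₂)ᴴ = A + S₂ from (hA.add hS₂).isHermitian] at h
  have hAApsd : (A * A).PosSemidef := by
    have h := Matrix.posSemidef_conjTranspose_mul_self A
    rwa [show Aᴴ = A from hA.isHermitian] at h
  have hS₂sq : (S₂ * S₂).PosSemidef := by
    have h := Matrix.posSemidef_conjTranspose_mul_self S₂
    rwa [show S₂ᴴ = S₂ from hS₂.isHermitian] at h
  set K : ℝ := ((A + S₂) * (A + S₂)).trace + S₂.trace with hKdef
  have hK : 0 ≤ K := add_nonneg (psd_trace_nonneg hP₁) (psd_trace_nonneg hS₂)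
  set δ : ℝ := min 1 (ε * η / (2 * (K + 1))) with hδdef
  have hδ : 0 < δ := lt_min one_pos (by positivity)
  have hδ1 : δ ≤ 1 := min_le_left _ _
  have hδ2 : δ ≤ ε * η / (2 * (K + 1)) := min_le_right _ _
  -- the matrix B
  set B := R + ε • (1 : Matrix (Fin d) (Fin d) ℝ) with hBdef
  have hBlb : ∀ x : Fin d → ℝ, ε * (x ⬝ᵥ x) ≤ x ⬝ᵥ B *ᵥ x := by
    intro x
    have h0 : (0:ℝ) ≤ x ⬝ᵥ R *ᵥ x := by simpa [star_trivial] using hRpsd.dotProduct_mulVec_nonneg x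
    rw [hBdef, add_mulVec, dotProduct_add, smul_mulVec, one_mulVec, dotProduct_smul,
      smul_eq_mul]
    linarith
  have hBpd : B.PosDef := Matrix.PosDef.posSemidef_add hRpsd (pd_smul_one hε)
  have hBdet : IsUnit B.det := (Matrix.isUnit_iff_isUnit_det _).mp hBpd.isUnit
  have hBt : Bᵀ = B := hBpd.isHermitian
  have hBinvpsd : (B⁻¹).PosSemidef := hBpd.inv.posSemidef
  have hBform : ∀ x : Fin d → ℝ, x ⬝ᵥ B⁻¹ *ᵥ x ≤ ε⁻¹ * (x ⬝ᵥ x) := inv_form_le hBpd hε hBlb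
  -- the matrix Aδ
  set Aδ := A + δ • (1 : Matrix (Fin d) (Fin d) ℝ) with hAδdef
  have hAδpd : Aδ.PosDef := Matrix.PosDef.posSemidef_add hA (pd_smul_one hδ)
  have hAδdet : IsUnit Aδ.det := (Matrix.isUnit_iff_isUnit_det _).mp hAδpd.isUnit
  have hAδt : Aδᵀ = Aδ := hAδpd.isHermitian
  have hAδinvt : (Aδ⁻¹)ᵀ = Aδ⁻¹ := by rw [Matrix.transpose_nonsing_inv, hAδt]
  have hAδinv : Aδ⁻¹ * Aδ = 1 := Matrix.nonsing_inv_mul _ hAδdet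
  have hAδinv' : Aδ * Aδ⁻¹ = 1 := Matrix.mul_nonsing_inv _ hAδdet
  have hBinv' : B * B⁻¹ = 1 := Matrix.mul_nonsing_inv _ hBdet
  have hBinv : B⁻¹ * B = 1 := Matrix.nonsing_inv_mul _ hBdet
  refine ⟨Aδ⁻¹ * B * Aδ⁻¹, Aδ * B⁻¹ * Aδ, ?_, ?_, ?_, ?_⟩
  · -- T PSD
    have := hBpd.posSemidef.mul_mul_conjTranspose_same Aδ⁻¹
    rwa [show (Aδ⁻¹)ᴴ = Aδ⁻¹ from hAδinvt] at this
  · -- T' symm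
    have hBinvt : (B⁻¹)ᵀ = B⁻¹ := hBpd.inv.isHermitian
    simp [Matrix.transpose_mul, hAδt, hBinvt, Matrix.mul_assoc]
  · -- T * T' = 1
    calc Aδ⁻¹ * B * Aδ⁻¹ * (Aδ * B⁻¹ * Aδ)
        = Aδ⁻¹ * (B * ((Aδ⁻¹ * Aδ) * (B⁻¹ * Aδ))) := by
          simp only [Matrix.mul_assoc]
      _ = Aδ⁻¹ * ((B * B⁻¹) * Aδ) := by rw [hAδinv, one_mul, Matrix.mul_assoc]
      _ = 1 := by rw [hBinv', one_mul, hAδinv]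
  · -- the trace bound
    have bound1 : (Aδ⁻¹ * B * Aδ⁻¹ * S₁).trace ≤ τ + ε * d := by
      have hQ : (1 : Matrix (Fin d) (Fin d) ℝ) - Aδ⁻¹ * (A * A) * Aδ⁻¹
          = Aδ⁻¹ * ((2 * δ) • A + (δ ^ 2) • (1 : Matrix (Fin d) (Fin d) ℝ)) * Aδ⁻¹ := by
        have h1 : (1 : Matrix (Fin d) (Fin d) ℝ) = Aδ⁻¹ * (Aδ * Aδ) * Aδ⁻¹ := by
          rw [← Matrix.mul_assoc, Matrix.mul_assoc _ _ Aδ⁻¹]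
          rw [show Aδ⁻¹ * Aδ * (Aδ * Aδ⁻¹) = Aδ⁻¹ * Aδ * (Aδ * Aδ⁻¹) from rfl, hAδinv, hAδinv',
            one_mul]
        have h2 : Aδ * Aδ - A * A = (2 * δ) • A + (δ ^ 2) • (1 : Matrix (Fin d) (Fin d) ℝ) := by
          rw [hAδdef]
          simp only [Matrix.add_mul, Matrix.mul_add, Matrix.smul_mul, Matrix.mul_smul,
            Matrix.one_mul, Matrix.mul_one, smul_smul]
          module
        calc (1 : Matrix (Fin d) (Fin d) ℝ) - Aδ⁻¹ * (A * A) * Aδ⁻¹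
            = Aδ⁻¹ * (Aδ * Aδ) * Aδ⁻¹ - Aδ⁻¹ * (A * A) * Aδ⁻¹ := by rw [← h1]
          _ = Aδ⁻¹ * (Aδ * Aδ - A * A) * Aδ⁻¹ := by
              rw [Matrix.mul_sub, Matrix.sub_mul]
          _ = _ := by rw [h2]
      have hQpsd : ((1 : Matrix (Fin d) (Fin d) ℝ) - Aδ⁻¹ * (A * A) * Aδ⁻¹).PosSemidef := by
        rw [hQ]
        have hin : ((2 * δ) • A + (δ ^ 2) • (1 : Matrix (Fin d) (Fin d) ℝ)).PosSemidef :=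
          (psd_smul hA (by positivity)).add (psd_smul (Matrix.PosSemidef.one) (by positivity))
        have := hin.mul_mul_conjTranspose_same Aδ⁻¹
        rwa [show (Aδ⁻¹)ᴴ = Aδ⁻¹ from hAδinvt] at this
      have e1 : (Aδ⁻¹ * B * Aδ⁻¹ * S₁).trace = (B * (Aδ⁻¹ * (A * A) * Aδ⁻¹)).trace := by
        rw [show Aδ⁻¹ * B * Aδ⁻¹ * S₁ = Aδ⁻¹ * (B * (Aδ⁻¹ * (A * A))) by
          rw [← hAA]; simp only [Matrix.mul_assoc]]
        rw [trace_mul_comm]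
        simp only [Matrix.mul_assoc]
      have e2 : 0 ≤ (B * ((1 : Matrix (Fin d) (Fin d) ℝ) - Aδ⁻¹ * (A * A) * Aδ⁻¹)).trace :=
        trace_mul_nonneg hBpd.posSemidef hQpsd
      rw [Matrix.mul_sub, Matrix.mul_one, trace_sub] at e2
      have e3 : B.trace = τ + ε * d := by
        rw [hBdef, trace_add, trace_smul, trace_one, smul_eq_mul]
        simp [hτ]
      rw [e1]
      rw [e3] at e2
      linarith
    have bound2 : (Aδ * B⁻¹ * Aδ * S₂).trace ≤ τ + η / 2 := by
      have e1 : (Aδ * B⁻¹ * Aδ * S₂).trace = (B⁻¹ * (Aδ * (S₂ * Aδ))).trace := by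
        rw [show Aδ * B⁻¹ * Aδ * S₂ = Aδ * (B⁻¹ * (Aδ * S₂)) by simp only [Matrix.mul_assoc]]
        rw [trace_mul_comm]
        simp only [Matrix.mul_assoc]
      have hN : Aδ * (S₂ * Aδ) = M + δ • ((A + S₂) * (A + S₂)) - δ • (A * A) - δ • (S₂ * S₂)
          + (δ ^ 2) • S₂ := by
        rw [hAδdef, hMdef]
        simp only [Matrix.add_mul, Matrix.mul_add, Matrix.smul_mul, Matrix.mul_smul,
          Matrix.one_mul, Matrix.mul_one, smul_smul, Matrix.mul_assoc]
        module
      have b1 : (B⁻¹ * M).trace ≤ τ := by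
        have key : R - B⁻¹ * M = ε • (B⁻¹ * R) := by
          have hRB : R = B - ε • (1 : Matrix (Fin d) (Fin d) ℝ) := by
            rw [hBdef]; abel
          calc R - B⁻¹ * M = R - B⁻¹ * (R * R) := by rw [hRR]
            _ = R - B⁻¹ * ((B - ε • (1 : Matrix (Fin d) (Fin d) ℝ)) * R) := by rw [← hRB]
            _ = R - (B⁻¹ * (B * R) - ε • (B⁻¹ * R)) := by
                rw [Matrix.sub_mul, Matrix.mul_sub, Matrix.smul_mul, Matrix.mul_smul, Matrix.one_mul]
            _ = ε • (B⁻¹ * R) := by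
                rw [← Matrix.mul_assoc, hBinv, Matrix.one_mul]; abel
        have h0 : 0 ≤ ε * (B⁻¹ * R).trace := mul_nonneg hε.le (trace_mul_nonneg hBinvpsd hRpsd)
        have h1 : τ - (B⁻¹ * M).trace = ε * (B⁻¹ * R).trace := by
          rw [hτ, ← trace_sub, key, trace_smul, smul_eq_mul]
        linarith
      have b2 : (B⁻¹ * ((A + S₂) * (A + S₂))).trace ≤ ε⁻¹ * ((A + S₂) * (A + S₂)).trace :=
        trace_mul_le_of_form hBform hP₁
      have b3 : 0 ≤ (B⁻¹ * (A * A)).trace := trace_mul_nonneg hBinvpsd hAApsd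
      have b4 : 0 ≤ (B⁻¹ * (S₂ * S₂)).trace := trace_mul_nonneg hBinvpsd hS₂sq
      have b5 : (B⁻¹ * S₂).trace ≤ ε⁻¹ * S₂.trace := trace_mul_le_of_form hBform hS₂
      have expand : (B⁻¹ * (Aδ * (S₂ * Aδ))).trace
          = (B⁻¹ * M).trace + δ * (B⁻¹ * ((A + S₂) * (A + S₂))).trace
            - δ * (B⁻¹ * (A * A)).trace - δ * (B⁻¹ * (S₂ * S₂)).trace
            + δ ^ 2 * (B⁻¹ * S₂).trace := by
        rw [hN]
        simp only [Matrix.mul_add, Matrix.mul_sub, Matrix.mul_smul, trace_add, trace_sub,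
          trace_smul, smul_eq_mul]
      have hfin : (B⁻¹ * (Aδ * (S₂ * Aδ))).trace ≤ τ + δ * ε⁻¹ * K := by
        rw [expand, hKdef]
        have hb2' : δ * (B⁻¹ * ((A + S₂) * (A + S₂))).trace
            ≤ δ * (ε⁻¹ * ((A + S₂) * (A + S₂)).trace) := by
          exact mul_le_mul_of_nonneg_left b2 hδ.le
        have hb5' : δ ^ 2 * (B⁻¹ * S₂).trace ≤ δ * (ε⁻¹ * S₂.trace) := by
          have h1 : δ ^ 2 * (B⁻¹ * S₂).trace ≤ δ ^ 2 * (ε⁻¹ * S₂.trace) :=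
            mul_le_mul_of_nonneg_left b5 (sq_nonneg δ)
          have h2 : δ ^ 2 * (ε⁻¹ * S₂.trace) ≤ δ * (ε⁻¹ * S₂.trace) := by
            apply mul_le_mul_of_nonneg_right _
              (mul_nonneg (inv_nonneg.mpr hε.le) (psd_trace_nonneg hS₂))
            nlinarith
          linarith
        have hb3' : 0 ≤ δ * (B⁻¹ * (A * A)).trace := mul_nonneg hδ.le b3
        have hb4' : 0 ≤ δ * (B⁻¹ * (S₂ * S₂)).trace := mul_nonneg hδ.le b4
        have : δ * (ε⁻¹ * ((A + S₂) * (A + S₂)).trace) + δ * (ε⁻¹ * S₂.trace)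
            = δ * ε⁻¹ * (((A + S₂) * (A + S₂)).trace + S₂.trace) := by ring
        linarith
      have hδK : δ * ε⁻¹ * K ≤ η / 2 := by
        have h1 : δ * ε⁻¹ * K ≤ (ε * η / (2 * (K + 1))) * ε⁻¹ * K := by
          apply mul_le_mul_of_nonneg_right _ hK
          exact mul_le_mul_of_nonneg_right hδ2 (by positivity)
        have h2 : (ε * η / (2 * (K + 1))) * ε⁻¹ * K = η * (K / (K + 1)) / 2 := by
          field_simp
        have h3 : K / (K + 1) ≤ 1 := by
          rw [div_le_one (by linarith)]; linarith
        have h4 : η * (K / (K + 1)) / 2 ≤ η / 2 := by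
          have := mul_le_mul_of_nonneg_left h3 hη.le
          linarith
        linarith
      rw [e1]
      linarith
    have hεd : ε * d ≤ η / 2 := by
      rw [hεdef]
      rw [div_mul_eq_mul_div, div_le_div_iff₀ (by positivity) (by norm_num)]
      have : (d : ℝ) ≤ d + 1 := by linarith
      nlinarith [hη.le, this]
    rw [hmsq]
    linarith

section coords
variable {d : ℕ}

lemma coord_le (x : EuclideanSpace ℝ (Fin d)) (i : Fin d) : |x i| ≤ ‖x‖ := by
  rw [EuclideanSpace.norm_eq]
  have h1 : x i ^ 2 ≤ ∑ j, x j ^ 2 :=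
    Finset.single_le_sum (fun j _ => sq_nonneg (x j)) (Finset.mem_univ i)
  calc |x i| = Real.sqrt (x i ^ 2) := (Real.sqrt_sq_eq_abs _).symm
    _ ≤ √(∑ j, x j ^ 2) := Real.sqrt_le_sqrt h1
    _ = _ := by simp [Real.norm_eq_abs, sq_abs]

lemma norm_sq_coords (x : EuclideanSpace ℝ (Fin d)) : ‖x‖ ^ 2 = ∑ i, x i ^ 2 := by
  rw [EuclideanSpace.norm_eq, Real.sq_sqrt (Finset.sum_nonneg fun i _ => by positivity)]
  simp [Real.norm_eq_abs, sq_abs]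

end coords


/-- Gelbrich lower bound on the quadratic transport cost between two measures
with equal mass `c₁`, means `m₁, m₂` and covariances `S₁, S₂`. -/
theorem transport_cost_lower_bound {d : ℕ}
    (μ₁ μ₂ : Measure (EuclideanSpace ℝ (Fin d)))
    (c₁ : ℝ) (hc₁ : 0 < c₁)
    (hmass₁ : μ₁ Set.univ = ENNReal.ofReal c₁)
    (hmass₂ : μ₂ Set.univ = ENNReal.ofReal c₁)
    (m₁ m₂ : EuclideanSpace ℝ (Fin d))
    (S₁ S₂ : Matrix (Fin d) (Fin d) ℝ)
    (hS₁ : S₁.PosSemidef) (hS₂ : S₂.PosSemidef)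
    (hmean₁ : ∀ i, ∫ x, x i ∂μ₁ = c₁ * m₁ i)
    (hmean₂ : ∀ i, ∫ x, x i ∂μ₂ = c₁ * m₂ i)
    (hcov₁ : ∀ i j, ∫ x, (x i - m₁ i) * (x j - m₁ j) ∂μ₁ = c₁ * S₁ i j)
    (hcov₂ : ∀ i j, ∫ x, (x i - m₂ i) * (x j - m₂ j) ∂μ₂ = c₁ * S₂ i j)
    (μ : Measure (EuclideanSpace ℝ (Fin d) × EuclideanSpace ℝ (Fin d)))
    [IsFiniteMeasure μ]
    (hfst : μ.fst = μ₁) (hsnd : μ.snd = μ₂)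
    (hmom : Integrable (fun p => ‖p.1‖ ^ 2 + ‖p.2‖ ^ 2) μ) :
    c₁ * (‖m₂ - m₁‖ ^ 2 +
        (S₁ + S₂ - (2 : ℝ) • msqrt (msqrt S₁ * S₂ * msqrt S₁)).trace)
      ≤ ∫ p, ‖p.2 - p.1‖ ^ 2 ∂μ := by
  classical
  -- marginals
  have hmarg1 : ∀ f : EuclideanSpace ℝ (Fin d) → ℝ, AEStronglyMeasurable f μ₁ →
      ∫ x, f x ∂μ₁ = ∫ p, f p.1 ∂μ := by
    intro f hf
    rw [← hfst, Measure.fst, integral_map measurable_fst.aemeasurable]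
    rw [← hfst, Measure.fst] at hf; exact hf
  have hmarg2 : ∀ f : EuclideanSpace ℝ (Fin d) → ℝ, AEStronglyMeasurable f μ₂ →
      ∫ x, f x ∂μ₂ = ∫ p, f p.2 ∂μ := by
    intro f hf
    rw [← hsnd, Measure.snd, integral_map measurable_snd.aemeasurable]
    rw [← hsnd, Measure.snd] at hf; exact hf
  have hcmass : (μ Set.univ).toReal = c₁ := by
    rw [show μ Set.univ = μ.fst Set.univ from (Measure.fst_univ).symm, hfst, hmass₁,
      ENNReal.toReal_ofReal hc₁.le]
  -- integrability
  have hi1 : Integrable (fun p : EuclideanSpace ℝ (Fin d) × EuclideanSpace ℝ (Fin d)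
      => ‖p.1‖ ^ 2) μ := by
    refine hmom.mono (by apply Continuous.aestronglyMeasurable; fun_prop)
      (Filter.Eventually.of_forall fun p => ?_)
    simp only [Real.norm_eq_abs]
    rw [abs_of_nonneg (sq_nonneg _), abs_of_nonneg (by positivity)]
    nlinarith [sq_nonneg ‖p.2‖]
  have hi2 : Integrable (fun p : EuclideanSpace ℝ (Fin d) × EuclideanSpace ℝ (Fin d)
      => ‖p.2‖ ^ 2) μ := by
    refine hmom.mono (by apply Continuous.aestronglyMeasurable; fun_prop)
      (Filter.Eventually.of_forall fun p => ?_)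
    simp only [Real.norm_eq_abs]
    rw [abs_of_nonneg (sq_nonneg _), abs_of_nonneg (by positivity)]
    nlinarith [sq_nonneg ‖p.1‖]
  have hn1 : Integrable (fun p : EuclideanSpace ℝ (Fin d) × EuclideanSpace ℝ (Fin d)
      => ‖p.1‖) μ := by
    refine (hi1.add (integrable_const 1)).mono
      (by apply Continuous.aestronglyMeasurable; fun_prop)
      (Filter.Eventually.of_forall fun p => ?_)
    simp only [Pi.add_apply, Real.norm_eq_abs]
    rw [abs_of_nonneg (norm_nonneg _), abs_of_nonneg (by positivity)]
    nlinarith [sq_nonneg (‖p.1‖ - 1)]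
  have hn2 : Integrable (fun p : EuclideanSpace ℝ (Fin d) × EuclideanSpace ℝ (Fin d)
      => ‖p.2‖) μ := by
    refine (hi2.add (integrable_const 1)).mono
      (by apply Continuous.aestronglyMeasurable; fun_prop)
      (Filter.Eventually.of_forall fun p => ?_)
    simp only [Pi.add_apply, Real.norm_eq_abs]
    rw [abs_of_nonneg (norm_nonneg _), abs_of_nonneg (by positivity)]
    nlinarith [sq_nonneg (‖p.2‖ - 1)]
  -- dominating function
  set g : EuclideanSpace ℝ (Fin d) × EuclideanSpace ℝ (Fin d) → ℝ :=
    fun p => (‖p.1‖ + ‖m₁‖) ^ 2 + (‖p.2‖ + ‖m₂‖) ^ 2 + 1 with hgdef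
  have hgint : Integrable g μ := by
    have hrw : g = fun p => ((‖p.1‖ ^ 2 + (2 * ‖m₁‖) * ‖p.1‖) + (‖m₁‖ ^ 2))
        + (((‖p.2‖ ^ 2 + (2 * ‖m₂‖) * ‖p.2‖) + ‖m₂‖ ^ 2) + 1) := by
      funext p; simp only [hgdef]; ring
    rw [hrw]
    exact ((hi1.add (hn1.const_mul _)).add (integrable_const _)).add
      (((hi2.add (hn2.const_mul _)).add (integrable_const _)).add (integrable_const 1))
  have hIb : ∀ f : EuclideanSpace ℝ (Fin d) × EuclideanSpace ℝ (Fin d) → ℝ,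
      Continuous f → (∀ p, |f p| ≤ g p) → Integrable f μ := by
    intro f hf hb
    refine hgint.mono (hf.aestronglyMeasurable) (Filter.Eventually.of_forall fun p => ?_)
    have hg0 : 0 ≤ g p := by simp only [hgdef]; positivity
    simp only [Real.norm_eq_abs]
    rw [abs_of_nonneg hg0]
    exact hb p
  -- coordinate bounds
  have hcd1 : ∀ (i : Fin d) (p : EuclideanSpace ℝ (Fin d) × EuclideanSpace ℝ (Fin d)),
      |p.1 i - m₁ i| ≤ ‖p.1‖ + ‖m₁‖ := by
    intro i p
    have h0 : p.1 i - m₁ i = (p.1 - m₁) i := by simp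
    rw [h0]
    exact (coord_le _ i).trans (norm_sub_le _ _)
  have hcd2 : ∀ (i : Fin d) (p : EuclideanSpace ℝ (Fin d) × EuclideanSpace ℝ (Fin d)),
      |p.2 i - m₂ i| ≤ ‖p.2‖ + ‖m₂‖ := by
    intro i p
    have h0 : p.2 i - m₂ i = (p.2 - m₂) i := by simp
    rw [h0]
    exact (coord_le _ i).trans (norm_sub_le _ _)
  -- integrable families
  have haa : ∀ i j, Integrable
      (fun p : EuclideanSpace ℝ (Fin d) × EuclideanSpace ℝ (Fin d)
        => (p.1 i - m₁ i) * (p.1 j - m₁ j)) μ := by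
    intro i j
    refine hIb _ (by fun_prop) fun p => ?_
    rw [abs_mul]
    have h1 := hcd1 i p; have h2 := hcd1 j p
    have := mul_le_mul h1 h2 (abs_nonneg _) (by positivity)
    have hgp : (‖p.1‖ + ‖m₁‖) * (‖p.1‖ + ‖m₁‖) ≤ g p := by
      simp only [hgdef]; nlinarith [sq_nonneg (‖p.2‖ + ‖m₂‖)]
    linarith
  have hbb : ∀ i j, Integrable
      (fun p : EuclideanSpace ℝ (Fin d) × EuclideanSpace ℝ (Fin d)
        => (p.2 i - m₂ i) * (p.2 j - m₂ j)) μ := by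
    intro i j
    refine hIb _ (by fun_prop) fun p => ?_
    rw [abs_mul]
    have h1 := hcd2 i p; have h2 := hcd2 j p
    have := mul_le_mul h1 h2 (abs_nonneg _) (by positivity)
    have hgp : (‖p.2‖ + ‖m₂‖) * (‖p.2‖ + ‖m₂‖) ≤ g p := by
      simp only [hgdef]; nlinarith [sq_nonneg (‖p.1‖ + ‖m₁‖)]
    linarith
  have hab : ∀ i j, Integrable
      (fun p : EuclideanSpace ℝ (Fin d) × EuclideanSpace ℝ (Fin d)
        => (p.1 i - m₁ i) * (p.2 j - m₂ j)) μ := by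
    intro i j
    refine hIb _ (by fun_prop) fun p => ?_
    rw [abs_mul]
    have h1 := hcd1 i p; have h2 := hcd2 j p
    have := mul_le_mul h1 h2 (abs_nonneg _) (by positivity)
    have hgp : (‖p.1‖ + ‖m₁‖) * (‖p.2‖ + ‖m₂‖) ≤ g p := by
      simp only [hgdef]; nlinarith [sq_nonneg ((‖p.1‖ + ‖m₁‖) - (‖p.2‖ + ‖m₂‖))]
    linarith
  have ha : ∀ i, Integrable
      (fun p : EuclideanSpace ℝ (Fin d) × EuclideanSpace ℝ (Fin d)
        => p.1 i - m₁ i) μ := by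
    intro i
    refine hIb _ (by fun_prop) fun p => ?_
    have h1 := hcd1 i p
    have h0 : (0:ℝ) ≤ ‖p.1‖ + ‖m₁‖ := by positivity
    simp only [hgdef]
    nlinarith [sq_nonneg (‖p.1‖ + ‖m₁‖ - 1), sq_nonneg (‖p.2‖ + ‖m₂‖)]
  have hb : ∀ i, Integrable
      (fun p : EuclideanSpace ℝ (Fin d) × EuclideanSpace ℝ (Fin d)
        => p.2 i - m₂ i) μ := by
    intro i
    refine hIb _ (by fun_prop) fun p => ?_
    have h1 := hcd2 i p
    have h0 : (0:ℝ) ≤ ‖p.2‖ + ‖m₂‖ := by positivity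
    simp only [hgdef]
    nlinarith [sq_nonneg (‖p.2‖ + ‖m₂‖ - 1), sq_nonneg (‖p.1‖ + ‖m₁‖)]
  -- integral values
  have vaa : ∀ i j, ∫ p, (p.1 i - m₁ i) * (p.1 j - m₁ j) ∂μ = c₁ * S₁ i j := by
    intro i j
    rw [← hmarg1 (fun x => (x i - m₁ i) * (x j - m₁ j))
      (by apply Continuous.aestronglyMeasurable; fun_prop)]
    exact hcov₁ i j
  have vbb : ∀ i j, ∫ p, (p.2 i - m₂ i) * (p.2 j - m₂ j) ∂μ = c₁ * S₂ i j := by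
    intro i j
    rw [← hmarg2 (fun x => (x i - m₂ i) * (x j - m₂ j))
      (by apply Continuous.aestronglyMeasurable; fun_prop)]
    exact hcov₂ i j
  have va : ∀ i, ∫ p, (p.1 i - m₁ i) ∂μ = 0 := by
    intro i
    have h1 : ∫ p, (p.1 i : ℝ) ∂μ = c₁ * m₁ i := by
      rw [← hmarg1 (fun x => x i) (by apply Continuous.aestronglyMeasurable; fun_prop)]
      exact hmean₁ i
    have hi : Integrable (fun p : EuclideanSpace ℝ (Fin d) × EuclideanSpace ℝ (Fin d)
        => (p.1 i : ℝ)) μ := by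
      have := (ha i).add (integrable_const (m₁ i))
      refine this.congr (Filter.Eventually.of_forall fun p => by simp)
    rw [integral_sub hi (integrable_const _), h1, integral_const, measureReal_def, hcmass, smul_eq_mul]
    ring
  have vb : ∀ i, ∫ p, (p.2 i - m₂ i) ∂μ = 0 := by
    intro i
    have h1 : ∫ p, (p.2 i : ℝ) ∂μ = c₁ * m₂ i := by
      rw [← hmarg2 (fun x => x i) (by apply Continuous.aestronglyMeasurable; fun_prop)]
      exact hmean₂ i
    have hi : Integrable (fun p : EuclideanSpace ℝ (Fin d) × EuclideanSpace ℝ (Fin d)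
        => (p.2 i : ℝ)) μ := by
      have := (hb i).add (integrable_const (m₂ i))
      refine this.congr (Filter.Eventually.of_forall fun p => by simp)
    rw [integral_sub hi (integrable_const _), h1, integral_const, measureReal_def, hcmass, smul_eq_mul]
    ring
  -- squared coordinate integrands
  have isq : ∀ i, Integrable (fun p : EuclideanSpace ℝ (Fin d) × EuclideanSpace ℝ (Fin d)
      => (p.2 i - p.1 i) ^ 2) μ := by
    intro i
    have comb := (((((hbb i i).add (haa i i)).add
      (integrable_const ((m₂ i - m₁ i) ^ 2))).sub ((hab i i).const_mul 2)).add
      ((hb i).const_mul (2 * (m₂ i - m₁ i)))).sub ((ha i).const_mul (2 * (m₂ i - m₁ i)))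
    refine comb.congr (Filter.Eventually.of_forall fun p => ?_)
    simp only [Pi.add_apply, Pi.sub_apply]
    ring
  have expand_i : ∀ i, ∫ p, (p.2 i - p.1 i) ^ 2 ∂μ
      = c₁ * S₁ i i + c₁ * S₂ i i + c₁ * (m₂ i - m₁ i) ^ 2
        - 2 * ∫ p, (p.1 i - m₁ i) * (p.2 i - m₂ i) ∂μ := by
    intro i
    have iBB := hbb i i
    have iAA := haa i i
    have iC : Integrable (fun _ : EuclideanSpace ℝ (Fin d) × EuclideanSpace ℝ (Fin d)
        => (m₂ i - m₁ i) ^ 2) μ := integrable_const _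
    have iD := (hab i i).const_mul (2 : ℝ)
    have iE := (hb i).const_mul (2 * (m₂ i - m₁ i))
    have iF := (ha i).const_mul (2 * (m₂ i - m₁ i))
    have hfun : (fun p : EuclideanSpace ℝ (Fin d) × EuclideanSpace ℝ (Fin d)
        => (p.2 i - p.1 i) ^ 2)
        = fun p => ((((p.2 i - m₂ i) * (p.2 i - m₂ i) + (p.1 i - m₁ i) * (p.1 i - m₁ i))
          + (m₂ i - m₁ i) ^ 2) - 2 * ((p.1 i - m₁ i) * (p.2 i - m₂ i))
          + (2 * (m₂ i - m₁ i)) * (p.2 i - m₂ i)) - (2 * (m₂ i - m₁ i)) * (p.1 i - m₁ i) := by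
      funext p; ring
    rw [hfun]
    rw [integral_sub, integral_add, integral_sub, integral_add, integral_add,
      integral_const_mul, integral_const_mul, integral_const_mul]
    rotate_left
    · exact iBB
    · exact iAA
    · exact (iBB.add iAA)
    · exact iC
    · exact ((iBB.add iAA).add iC)
    · exact iD
    · exact (((iBB.add iAA).add iC).sub iD)
    · exact iE
    · exact ((((iBB.add iAA).add iC).sub iD).add iE)
    · exact iF
    rw [vaa i i, vbb i i, va i, vb i, integral_const, measureReal_def, hcmass, smul_eq_mul]
    ring
  have htot : ∫ p, ‖p.2 - p.1‖ ^ 2 ∂μ = ∑ i, ∫ p, (p.2 i - p.1 i) ^ 2 ∂μ := by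
    rw [← integral_finset_sum _ (fun i _ => isq i)]
    refine integral_congr_ae (Filter.Eventually.of_forall fun p => ?_)
    show ‖p.2 - p.1‖ ^ 2 = ∑ i, (p.2 i - p.1 i) ^ 2
    rw [norm_sq_coords]
    refine Finset.sum_congr rfl fun i _ => ?_
    simp
  set ρ : ℝ := ∑ i, ∫ p, (p.1 i - m₁ i) * (p.2 i - m₂ i) ∂μ with hρdef
  have hsym1 : ∀ i j, S₁ j i = S₁ i j := by
    intro i j
    have h := hS₁.isHermitian.apply j i
    simpa using h.symm
  have hsym2 : ∀ i j, S₂ j i = S₂ i j := by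
    intro i j
    have h := hS₂.isHermitian.apply j i
    simpa using h.symm
  have cross : ∀ T T' : Matrix (Fin d) (Fin d) ℝ, T.PosSemidef → T'ᵀ = T' → T * T' = 1 →
      2 * ρ ≤ c₁ * ((T * S₁).trace + (T' * S₂).trace) := by
    intro T T' hT hT' hTT'
    have hiL : Integrable (fun p : EuclideanSpace ℝ (Fin d) × EuclideanSpace ℝ (Fin d)
        => ∑ i, (p.1 i - m₁ i) * (p.2 i - m₂ i)) μ :=
      integrable_finset_sum _ fun i _ => hab i i
    have hiR1 : Integrable (fun p : EuclideanSpace ℝ (Fin d) × EuclideanSpace ℝ (Fin d)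
        => ∑ i, ∑ j, T i j * ((p.1 i - m₁ i) * (p.1 j - m₁ j))) μ :=
      integrable_finset_sum _ fun i _ =>
        integrable_finset_sum _ fun j _ => (haa i j).const_mul _
    have hiR2 : Integrable (fun p : EuclideanSpace ℝ (Fin d) × EuclideanSpace ℝ (Fin d)
        => ∑ i, ∑ j, T' i j * ((p.2 i - m₂ i) * (p.2 j - m₂ j))) μ :=
      integrable_finset_sum _ fun i _ =>
        integrable_finset_sum _ fun j _ => (hbb i j).const_mul _
    have hL : 2 * ρ = ∫ p, 2 * ∑ i, (p.1 i - m₁ i) * (p.2 i - m₂ i) ∂μ := by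
      rw [hρdef, ← integral_finset_sum _ (fun i _ => hab i i), integral_const_mul]
    have hmono : ∫ p, 2 * ∑ i, (p.1 i - m₁ i) * (p.2 i - m₂ i) ∂μ
        ≤ ∫ p, ((∑ i, ∑ j, T i j * ((p.1 i - m₁ i) * (p.1 j - m₁ j)))
            + ∑ i, ∑ j, T' i j * ((p.2 i - m₂ i) * (p.2 j - m₂ j))) ∂μ := by
      refine integral_mono (hiL.const_mul 2) (hiR1.add hiR2) fun p => ?_
      have hpb := pointwise_bound hT hT' hTT'
        (fun i => p.1 i - m₁ i) (fun i => p.2 i - m₂ i)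
      have e1 : (fun i => p.1 i - m₁ i) ⬝ᵥ T *ᵥ (fun i => p.1 i - m₁ i)
          = ∑ i, ∑ j, T i j * ((p.1 i - m₁ i) * (p.1 j - m₁ j)) := by
        simp only [dotProduct, mulVec, Finset.mul_sum]
        exact Finset.sum_congr rfl fun i _ => Finset.sum_congr rfl fun j _ => by ring
      have e2 : (fun i => p.2 i - m₂ i) ⬝ᵥ T' *ᵥ (fun i => p.2 i - m₂ i)
          = ∑ i, ∑ j, T' i j * ((p.2 i - m₂ i) * (p.2 j - m₂ j)) := by
        simp only [dotProduct, mulVec, Finset.mul_sum]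
        exact Finset.sum_congr rfl fun i _ => Finset.sum_congr rfl fun j _ => by ring
      rw [e1, e2] at hpb
      exact hpb
    have hR1 : ∫ p, ∑ i, ∑ j, T i j * ((p.1 i - m₁ i) * (p.1 j - m₁ j)) ∂μ
        = c₁ * (T * S₁).trace := by
      rw [integral_finset_sum (f := fun i (p : EuclideanSpace ℝ (Fin d) × EuclideanSpace ℝ (Fin d)) => ∑ j, T i j * ((p.1 i - m₁ i) * (p.1 j - m₁ j)))
        _ (fun i _ => integrable_finset_sum _ fun j _ => (haa i j).const_mul _)]
      calc ∑ i, ∫ p, ∑ j, T i j * ((p.1 i - m₁ i) * (p.1 j - m₁ j)) ∂μ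
          = ∑ i, ∑ j, T i j * (c₁ * S₁ i j) := by
            refine Finset.sum_congr rfl fun i _ => ?_
            rw [integral_finset_sum _ (fun j _ => (haa i j).const_mul _)]
            exact Finset.sum_congr rfl fun j _ => by rw [integral_const_mul, vaa i j]
        _ = c₁ * (T * S₁).trace := by
            rw [Matrix.trace, Finset.mul_sum]
            refine Finset.sum_congr rfl fun i _ => ?_
            simp only [Matrix.diag_apply, Matrix.mul_apply, Finset.mul_sum]
            refine Finset.sum_congr rfl fun j _ => ?_
            rw [hsym1 i j]; ring
    have hR2 : ∫ p, ∑ i, ∑ j, T' i j * ((p.2 i - m₂ i) * (p.2 j - m₂ j)) ∂μ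
        = c₁ * (T' * S₂).trace := by
      rw [integral_finset_sum (f := fun i (p : EuclideanSpace ℝ (Fin d) × EuclideanSpace ℝ (Fin d)) => ∑ j, T' i j * ((p.2 i - m₂ i) * (p.2 j - m₂ j)))
        _ (fun i _ => integrable_finset_sum _ fun j _ => (hbb i j).const_mul _)]
      calc ∑ i, ∫ p, ∑ j, T' i j * ((p.2 i - m₂ i) * (p.2 j - m₂ j)) ∂μ
          = ∑ i, ∑ j, T' i j * (c₁ * S₂ i j) := by
            refine Finset.sum_congr rfl fun i _ => ?_
            rw [integral_finset_sum _ (fun j _ => (hbb i j).const_mul _)]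
            exact Finset.sum_congr rfl fun j _ => by rw [integral_const_mul, vbb i j]
        _ = c₁ * (T' * S₂).trace := by
            rw [Matrix.trace, Finset.mul_sum]
            refine Finset.sum_congr rfl fun i _ => ?_
            simp only [Matrix.diag_apply, Matrix.mul_apply, Finset.mul_sum]
            refine Finset.sum_congr rfl fun j _ => ?_
            rw [hsym2 i j]; ring
    have hsplit : ∫ p, ((∑ i, ∑ j, T i j * ((p.1 i - m₁ i) * (p.1 j - m₁ j)))
        + ∑ i, ∑ j, T' i j * ((p.2 i - m₂ i) * (p.2 j - m₂ j))) ∂μ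
        = c₁ * (T * S₁).trace + c₁ * (T' * S₂).trace := by
      rw [integral_add hiR1 hiR2, hR1, hR2]
    rw [hL]
    calc ∫ p, 2 * ∑ i, (p.1 i - m₁ i) * (p.2 i - m₂ i) ∂μ
        ≤ c₁ * (T * S₁).trace + c₁ * (T' * S₂).trace := by rw [← hsplit]; exact hmono
      _ = c₁ * ((T * S₁).trace + (T' * S₂).trace) := by ring
  have hρτ : ρ ≤ c₁ * (msqrt (msqrt S₁ * S₂ * msqrt S₁)).trace := by
    refine le_of_forall_pos_le_add fun ε hε => ?_
    obtain ⟨T, T', hT, hT', hTT', hsum⟩ := matrix_key S₁ S₂ hS₁ hS₂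
      (show (0:ℝ) < 2 * ε / c₁ by positivity)
    have h1 := cross T T' hT hT' hTT'
    have h2 : c₁ * ((T * S₁).trace + (T' * S₂).trace)
        ≤ c₁ * (2 * (msqrt (msqrt S₁ * S₂ * msqrt S₁)).trace + 2 * ε / c₁) :=
      mul_le_mul_of_nonneg_left hsum hc₁.le
    have h3 : c₁ * (2 * (msqrt (msqrt S₁ * S₂ * msqrt S₁)).trace + 2 * ε / c₁)
        = 2 * (c₁ * (msqrt (msqrt S₁ * S₂ * msqrt S₁)).trace) + 2 * ε := by
      field_simp
    linarith
  -- final assembly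
  have tracesplit : (S₁ + S₂ - (2 : ℝ) • msqrt (msqrt S₁ * S₂ * msqrt S₁)).trace
      = S₁.trace + S₂.trace - 2 * (msqrt (msqrt S₁ * S₂ * msqrt S₁)).trace := by
    rw [trace_sub, trace_add, trace_smul, smul_eq_mul]
  have normsplit : ‖m₂ - m₁‖ ^ 2 = ∑ i, (m₂ i - m₁ i) ^ 2 := by
    rw [norm_sq_coords]
    exact Finset.sum_congr rfl fun i _ => by simp
  have htr1 : S₁.trace = ∑ i, S₁ i i := by simp [Matrix.trace, Matrix.diag]
  have htr2 : S₂.trace = ∑ i, S₂ i i := by simp [Matrix.trace, Matrix.diag]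
  have hsumtot : ∑ i, ∫ p, (p.2 i - p.1 i) ^ 2 ∂μ
      = c₁ * S₁.trace + c₁ * S₂.trace + c₁ * ‖m₂ - m₁‖ ^ 2 - 2 * ρ := by
    calc ∑ i, ∫ p, (p.2 i - p.1 i) ^ 2 ∂μ
        = ∑ i, (c₁ * S₁ i i + c₁ * S₂ i i + c₁ * (m₂ i - m₁ i) ^ 2
          - 2 * ∫ p, (p.1 i - m₁ i) * (p.2 i - m₂ i) ∂μ) :=
          Finset.sum_congr rfl fun i _ => expand_i i
      _ = (∑ i, c₁ * S₁ i i) + (∑ i, c₁ * S₂ i i) + (∑ i, c₁ * (m₂ i - m₁ i) ^ 2)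
          - ∑ i, 2 * ∫ p, (p.1 i - m₁ i) * (p.2 i - m₂ i) ∂μ := by
          rw [Finset.sum_sub_distrib, Finset.sum_add_distrib, Finset.sum_add_distrib]
      _ = c₁ * S₁.trace + c₁ * S₂.trace + c₁ * ‖m₂ - m₁‖ ^ 2 - 2 * ρ := by
          rw [← Finset.mul_sum, ← Finset.mul_sum, ← Finset.mul_sum, ← Finset.mul_sum,
            ← htr1, ← htr2, ← normsplit, hρdef]
  rw [htot, hsumtot, tracesplit]
  have hfinal : c₁ * (‖m₂ - m₁‖ ^ 2
      + (S₁.trace + S₂.trace - 2 * (msqrt (msqrt S₁ * S₂ * msqrt S₁)).trace))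
      = c₁ * S₁.trace + c₁ * S₂.trace + c₁ * ‖m₂ - m₁‖ ^ 2
        - 2 * (c₁ * (msqrt (msqrt S₁ * S₂ * msqrt S₁)).trace) := by ring
  rw [hfinal]
  linarith [hρτ]
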